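/- In ℤG(m,1,n), the product ∏_{i=0}^{n-1} (⁽ᵐ⁾Ш_{1,n-1} − i·m) equals the sum of all elements of the group G(m,1,n). -/

import Mathlib

open Finset Multiplicative

/-- The cyclic group of order `m` (written multiplicatively). -/
abbrev Cm (m : ℕ) : Type := Multiplicative (ZMod m)

/-- The action of `S_n` on `(C_m)^n` permuting coordinates. -/
def wrAct (m n : ℕ) : Equiv.Perm (Fin n) →* MulAut (Fin n → Cm m) where
  toFun σ :=
    { toFun := fun f => f ∘ σ.symm
      invFun := fun f => f ∘ σ
      left_inv := fun f => by ext i; simp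
      right_inv := fun f => by ext i; simp
      map_mul' := fun f g => rfl }
  map_one' := by ext f i; rfl
  map_mul' := fun σ τ => by ext f i; rfl

/-- The wreath product `C_m ≀ S_n = (C_m)^n ⋊ S_n`, i.e. the group `G(m,1,n)`. -/
abbrev GG (m n : ℕ) := (Fin n → Cm m) ⋊[wrAct m n] Equiv.Perm (Fin n)

def ggEquiv (m n : ℕ) : GG m n ≃ (Fin n → Cm m) × Equiv.Perm (Fin n) where
  toFun g := (g.left, g.right)
  invFun p := ⟨p.1, p.2⟩
  left_inv _ := rfl
  right_inv _ := rfl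

instance (m n : ℕ) [NeZero m] : Fintype (GG m n) :=
  Fintype.ofEquiv _ (ggEquiv m n).symm

instance (m n : ℕ) : DecidableEq (GG m n) := (ggEquiv m n).decidableEq

/-- The generator `s_{i+1}` of `G(m,1,n)`: the simple transposition `(i+1, i+2)`
(0-indexed: `sGen m n i` swaps positions `i` and `i+1`). -/
def sGen (m n : ℕ) (i : ℕ) : GG m n :=
  if h : i + 1 < n then
    SemidirectProduct.inr (Equiv.swap ⟨i, Nat.lt_of_succ_lt h⟩ ⟨i + 1, h⟩) else 1

/-- The generator `t_{i+1}` of `G(m,1,n)`, rotating the `(i+1)`-st card (0-indexed). -/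
def tGen (m n : ℕ) (i : ℕ) : GG m n :=
  if h : i < n then
    SemidirectProduct.inl (Pi.mulSingle ⟨i, h⟩ (ofAdd (1 : ZMod m))) else 1

/-- `⁽ᵐ⁾Ш_{1,k-1} = (1 + s_{k-1} + s_{k-2}s_{k-1} + ⋯ + s_1⋯s_{k-1})(1 + t_k + ⋯ + t_k^{m-1})`,
viewed inside `ℤ G(m,1,n)` (case `k = n` is the 1-shuffle element of `G(m,1,n)` itself). -/
noncomputable def msha (m n k : ℕ) : MonoidAlgebra ℤ (GG m n) :=
  (∑ l ∈ Finset.range k, MonoidAlgebra.of ℤ (GG m n)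
      (((List.range l).map (fun p => sGen m n (k - 1 - l + p))).prod)) *
  (∑ a ∈ Finset.range m, MonoidAlgebra.of ℤ (GG m n) (tGen m n (k - 1) ^ a))

namespace MshaProof
open SemidirectProduct Equiv

/-- `ℕ`-level formula for the cycle `c_l` (sends `n-1` to `n-1-l`, shifts up in between). -/
def cN (n l : ℕ) (x : ℕ) : ℕ :=
  if x < n-1-l then x else if x = n-1 then n-1-l else x+1

/-- `ℕ`-level formula for the inverse cycle. -/
def ciN (n l : ℕ) (x : ℕ) : ℕ :=
  if x < n-1-l then x else if x = n-1-l then n-1 else x-1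

def swapN (n i : ℕ) : Equiv.Perm (Fin n) :=
  if h : i + 1 < n then Equiv.swap ⟨i, Nat.lt_of_succ_lt h⟩ ⟨i+1, h⟩ else 1

/-- The permutation part of the `l`-th term of the shuffle element. -/
def cp (n l : ℕ) : Equiv.Perm (Fin n) :=
  ((List.range l).map (fun p => swapN n (n-1-l+p))).prod

lemma cp_succ {n l : ℕ} (hl : l + 1 ≤ n - 1) :
    cp n (l+1) = swapN n (n-2-l) * cp n l := by
  unfold cp
  simp only [List.range_succ_eq_map, List.map_cons, List.map_map, List.prod_cons]
  congr 1
  · congr 1; omega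
  · apply congrArg
    apply List.map_congr_left
    intro p _
    simp only [Function.comp_apply]
    congr 1
    omega

lemma ciN_lt {n l x : ℕ} (hx : x < n) : ciN n l x < n := by
  unfold ciN; split_ifs <;> omega

lemma cN_lt {n l x : ℕ} (hl : l ≤ n - 1) (hx : x < n) : cN n l x < n := by
  unfold cN; split_ifs <;> omega

lemma cp_apply {n l : ℕ} (hl : l ≤ n - 1) (x : Fin n) :
    (cp n l x : ℕ) = cN n l x := by
  induction l with
  | zero =>
    have hx := x.isLt
    show ((1 : Equiv.Perm (Fin n)) x : ℕ) = cN n 0 (x : ℕ)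
    rw [Equiv.Perm.one_apply]
    unfold cN
    split_ifs <;> omega
  | succ l ih =>
    have hl' : l ≤ n - 1 := by omega
    have hx := x.isLt
    rw [cp_succ hl, Equiv.Perm.mul_apply]
    have hy : (cp n l x : ℕ) = cN n l x := ih hl'
    have hcn : cN n l x < n := cN_lt hl' x.isLt
    -- evaluate the swap
    have hswap : swapN n (n-2-l) = Equiv.swap ⟨n-2-l, by omega⟩ ⟨n-2-l+1, by omega⟩ := by
      unfold swapN; rw [dif_pos (by omega)]
    rw [hswap]
    rcases eq_or_ne ((cp n l x : ℕ)) (n-2-l) with h1 | h1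
    · have : cp n l x = (⟨n-2-l, by omega⟩ : Fin n) := Fin.ext h1
      rw [this, Equiv.swap_apply_left]
      simp only [cN] at hy ⊢
      split_ifs at hy ⊢ <;> omega
    · rcases eq_or_ne ((cp n l x : ℕ)) (n-2-l+1) with h2 | h2
      · have : cp n l x = (⟨n-2-l+1, by omega⟩ : Fin n) := Fin.ext h2
        rw [this, Equiv.swap_apply_right]
        simp only [cN] at hy ⊢
        split_ifs at hy ⊢ <;> omega
      · rw [Equiv.swap_apply_of_ne_of_ne (by simp [Fin.ext_iff, h1]) (by simp [Fin.ext_iff, h2])]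
        simp only [cN] at hy ⊢
        split_ifs at hy ⊢ <;> omega

lemma cp_symm_apply {n l : ℕ} (hl : l ≤ n - 1) (x : Fin n) :
    (((cp n l)⁻¹ x : Fin n) : ℕ) = ciN n l (x : ℕ) := by
  have hx := x.isLt
  have hlt : ciN n l (x : ℕ) < n := ciN_lt hx
  have : cp n l ⟨ciN n l (x : ℕ), hlt⟩ = x := by
    apply Fin.ext
    rw [cp_apply hl]
    simp only [cN, ciN]
    split_ifs <;> omega
  have h2 : (cp n l)⁻¹ x = ⟨ciN n l (x : ℕ), hlt⟩ := by
    rw [Equiv.Perm.inv_eq_iff_eq]; exact this.symm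
  rw [h2]

/-- The group element `s_{n-l}⋯s_{n-1} t_n^a` (0-indexed data). -/
def uElt (m n l a : ℕ) : GG m n :=
  (((List.range l).map (fun p => sGen m n (n - 1 - l + p))).prod) * tGen m n (n-1) ^ a

lemma sGen_eq_inr (m n i : ℕ) : sGen m n i = SemidirectProduct.inr (swapN n i) := by
  unfold sGen swapN
  split_ifs
  · rfl
  · rw [map_one]

lemma sGen_prod_eq (m n l : ℕ) :
    (((List.range l).map (fun p => sGen m n (n - 1 - l + p))).prod)
      = SemidirectProduct.inr (cp n l) := by
  unfold cp
  rw [MonoidHom.map_list_prod, List.map_map]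
  congr 1
  apply List.map_congr_left
  intro p _
  exact (sGen_eq_inr m n _)

lemma tGen_pow_eq (m n a : ℕ) (hn : 1 ≤ n) :
    tGen m n (n-1) ^ a
      = SemidirectProduct.inl (Pi.mulSingle (⟨n-1, by omega⟩ : Fin n) (ofAdd ((a : ZMod m)))) := by
  unfold tGen
  rw [dif_pos (by omega : n - 1 < n), ← map_pow]
  congr 1
  have h1 : (ofAdd ((a : ZMod m))) = (ofAdd ((1 : ZMod m))) ^ a := by
    rw [← ofAdd_nsmul]
    congr 1
    simp [nsmul_eq_mul]
  rw [h1, Pi.mulSingle_pow]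

lemma uElt_eq (m n l a : ℕ) (hn : 1 ≤ n) :
    uElt m n l a = SemidirectProduct.inr (cp n l) *
      SemidirectProduct.inl (Pi.mulSingle (⟨n-1, by omega⟩ : Fin n) (ofAdd ((a : ZMod m)))) := by
  unfold uElt
  rw [sGen_prod_eq, tGen_pow_eq m n a hn]

/-- `ℕ`-valued version of the permutation part of `g`. -/
def tauN (m n : ℕ) (g : GG m n) (i : ℕ) : ℕ :=
  if hi : i < n then (g.right ⟨i, hi⟩ : ℕ) else i

/-- evaluation of the vector part of `g` along the permutation. -/
def nuN (m n : ℕ) (g : GG m n) (i : ℕ) : Cm m :=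
  if hi : i < n then g.left (g.right ⟨i, hi⟩) else 1

lemma hu_right (m n : ℕ) (h : GG m n) (c : Equiv.Perm (Fin n)) (s : Fin n → Cm m) :
    (h * (SemidirectProduct.inr c * SemidirectProduct.inl s)⁻¹).right = h.right * c⁻¹ := by
  simp [SemidirectProduct.mul_right, SemidirectProduct.inv_right]

lemma hu_left (m n : ℕ) (h : GG m n) (c : Equiv.Perm (Fin n)) (s : Fin n → Cm m) (x : Fin n) :
    (h * (SemidirectProduct.inr c * SemidirectProduct.inl s)⁻¹).left x
      = h.left x * (s ((h.right)⁻¹ x))⁻¹ := by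
  simp only [SemidirectProduct.mul_left, SemidirectProduct.inv_left,
    SemidirectProduct.mul_right, SemidirectProduct.inv_right,
    SemidirectProduct.left_inl, SemidirectProduct.right_inl,
    SemidirectProduct.left_inr, SemidirectProduct.right_inr]
  simp only [wrAct, MonoidHom.coe_mk, OneHom.coe_mk, Equiv.coe_fn_mk,
    Pi.mul_apply, Pi.inv_apply, Function.comp_apply, map_one, one_mul, mul_one]
  simp [Equiv.Perm.inv_def]

lemma tauN_hu (m n : ℕ) (h : GG m n) (l a i : ℕ) (hn : 1 ≤ n) (hl : l ≤ n - 1) (hi : i < n) :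
    tauN m n (h * (uElt m n l a)⁻¹) i = tauN m n h (ciN n l i) := by
  rw [uElt_eq m n l a hn]
  unfold tauN
  rw [dif_pos hi, dif_pos (ciN_lt hi)]
  rw [hu_right]
  have : (h.right * (cp n l)⁻¹) ⟨i, hi⟩ = h.right ((cp n l)⁻¹ ⟨i, hi⟩) := rfl
  rw [this]
  congr 2
  apply Fin.ext
  exact cp_symm_apply hl _

lemma nuN_hu (m n : ℕ) (h : GG m n) (l a i : ℕ) (hn : 1 ≤ n) (hl : l ≤ n - 1) (hi : i < n) :
    nuN m n (h * (uElt m n l a)⁻¹) i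
      = nuN m n h (ciN n l i) * (if i = n - 1 - l then (ofAdd ((a : ZMod m)))⁻¹ else 1) := by
  rw [uElt_eq m n l a hn]
  unfold nuN
  rw [dif_pos hi, dif_pos (ciN_lt hi)]
  rw [hu_left, hu_right]
  have hx : (h.right * (cp n l)⁻¹) ⟨i, hi⟩ = h.right (⟨ciN n l i, ciN_lt hi⟩ : Fin n) := by
    have : (h.right * (cp n l)⁻¹) ⟨i, hi⟩ = h.right ((cp n l)⁻¹ ⟨i, hi⟩) := rfl
    rw [this]
    congr 1
    apply Fin.ext
    exact cp_symm_apply hl _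
  rw [hx]
  congr 1
  have hococ : (h.right)⁻¹ (h.right (⟨ciN n l i, ciN_lt hi⟩ : Fin n)) = ⟨ciN n l i, ciN_lt hi⟩ :=
    Equiv.symm_apply_apply _ _
  rw [hococ]
  rw [Pi.mulSingle_apply]
  have hiff : ((⟨ciN n l i, ciN_lt hi⟩ : Fin n) = (⟨n-1, by omega⟩ : Fin n)) ↔ (i = n - 1 - l) := by
    rw [Fin.ext_iff]
    simp only []
    unfold ciN
    split_ifs <;> omega
  by_cases hc : i = n - 1 - l
  · rw [if_pos (hiff.mpr hc), if_pos hc]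
  · rw [if_neg (fun hh => hc (hiff.mp hh)), if_neg hc, inv_one]

/-- The predicate cutting out the partial-shuffle set `T_k`. -/
def Tp (m n k : ℕ) (g : GG m n) : Prop :=
  (∀ j, j < n - k → ∀ i, i < j → tauN m n g i < tauN m n g j) ∧
  (∀ i, i < n - k → nuN m n g i = 1)

instance TpDec (m n k : ℕ) (g : GG m n) : Decidable (Tp m n k g) := by
  unfold Tp
  infer_instance

/-- The sequence obtained from `s` by inserting the value `c` at position `r`. -/
def insSeq (s : ℕ → ℕ) (c r i : ℕ) : ℕ :=
  if i < r then s i else if i = r then c else s (i-1)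

lemma insSeq_lt {s : ℕ → ℕ} {c r i : ℕ} (h : i < r) : insSeq s c r i = s i := if_pos h

lemma insSeq_eq {s : ℕ → ℕ} {c r : ℕ} : insSeq s c r r = c := by
  unfold insSeq
  rw [if_neg (lt_irrefl r), if_pos rfl]

lemma insSeq_gt {s : ℕ → ℕ} {c r i : ℕ} (h : r < i) : insSeq s c r i = s (i-1) := by
  unfold insSeq
  rw [if_neg (by omega), if_neg (by omega)]

/-- Counting: there is exactly one position where `c` can be inserted into an increasing
sequence so that the result stays increasing (and none if `s` is not increasing). -/
lemma ins_count (W : ℕ) (hW : 1 ≤ W) (s : ℕ → ℕ) (c : ℕ) (hc : ∀ j, j < W - 1 → s j ≠ c) :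
    (∑ r ∈ Finset.range W,
        (if (∀ j, j < W → ∀ i, i < j → insSeq s c r i < insSeq s c r j) then (1:ℤ) else 0))
      = if (∀ j, j < W - 1 → ∀ i, i < j → s i < s j) then 1 else 0 := by
  by_cases hs : ∀ j, j < W - 1 → ∀ i, i < j → s i < s j
  · rw [if_pos hs]
    set r0 := ((Finset.range (W-1)).filter (fun j => s j < c)).card with hr0
    have hr0le : r0 ≤ W - 1 := by
      have := Finset.card_filter_le (Finset.range (W-1)) (fun j => s j < c)
      rwa [Finset.card_range] at this
    have hmem : ∀ j, j < W - 1 → (s j < c ↔ j < r0) := by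
      intro j hj
      constructor
      · intro hsj
        have hsub : Finset.range (j+1) ⊆ (Finset.range (W-1)).filter (fun j => s j < c) := by
          intro x hx
          rw [Finset.mem_range] at hx
          rw [Finset.mem_filter, Finset.mem_range]
          refine ⟨by omega, ?_⟩
          rcases eq_or_lt_of_le (Nat.lt_succ_iff.mp hx) with h | h
          · rwa [h]
          · exact lt_trans (hs j hj x h) hsj
        have := Finset.card_le_card hsub
        rw [Finset.card_range] at this
        omega
      · intro hjr
        by_contra hsj
        have hcj : c < s j := by
          have := hc j hj
          omega
        have hsub : (Finset.range (W-1)).filter (fun j => s j < c) ⊆ Finset.range j := by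
          intro x hx
          rw [Finset.mem_filter, Finset.mem_range] at hx
          rw [Finset.mem_range]
          by_contra hxj
          rcases eq_or_lt_of_le (Nat.le_of_not_lt hxj) with h | h
          · subst h; omega
          · have := hs x hx.1 j h
            omega
        have := Finset.card_le_card hsub
        rw [Finset.card_range] at this
        omega
    have hIncr0 : ∀ j, j < W → ∀ i, i < j → insSeq s c r0 i < insSeq s c r0 j := by
      intro j hj i hij
      rcases Nat.lt_trichotomy j r0 with hj1 | hj1 | hj1
      · rw [insSeq_lt (lt_trans hij hj1), insSeq_lt hj1]
        exact hs j (by omega) i hij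
      · subst hj1
        rw [insSeq_eq, insSeq_lt hij]
        exact (hmem i (by omega)).mpr hij
      · rw [insSeq_gt hj1]
        have hcj : c < s (j-1) := by
          have h1 := hmem (j-1) (by omega)
          have h2 := hc (j-1) (by omega)
          omega
        rcases Nat.lt_trichotomy i r0 with hi1 | hi1 | hi1
        · rw [insSeq_lt hi1]
          have : s i < c := (hmem i (by omega)).mpr hi1
          omega
        · subst hi1
          rw [insSeq_eq]
          exact hcj
        · rw [insSeq_gt hi1]
          exact hs (j-1) (by omega) (i-1) (by omega)
    have huniq : ∀ r, r < W → (∀ j, j < W → ∀ i, i < j → insSeq s c r i < insSeq s c r j)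
        → r = r0 := by
      intro r hr hInc
      have hiff : ∀ j, j < W - 1 → (s j < c ↔ j < r) := by
        intro j hj
        constructor
        · intro hsj
          by_contra hjr
          have h1 := hInc (j+1) (by omega) r (by omega)
          rw [insSeq_eq, insSeq_gt (by omega)] at h1
          simp only [Nat.add_sub_cancel] at h1
          omega
        · intro hjr
          have h1 := hInc r (by omega) j hjr
          rwa [insSeq_lt hjr, insSeq_eq] at h1
      have hfil : (Finset.range (W-1)).filter (fun j => s j < c) = Finset.range r := by
        ext x
        rw [Finset.mem_filter, Finset.mem_range, Finset.mem_range]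
        constructor
        · intro ⟨h1, h2⟩
          exact (hiff x h1).mp h2
        · intro hx
          have hxw : x < W - 1 := by omega
          exact ⟨hxw, (hiff x hxw).mpr hx⟩
      rw [hr0, hfil, Finset.card_range]
    rw [Finset.sum_eq_single_of_mem r0 (Finset.mem_range.mpr (by omega))
      (fun r hr hne => if_neg (fun hInc => hne (huniq r (Finset.mem_range.mp hr) hInc)))]
    rw [if_pos hIncr0]
  · rw [if_neg hs]
    apply Finset.sum_eq_zero
    intro r hr
    rw [if_neg]
    intro hInc
    apply hs
    intro j hj i hij
    have h1 := hInc (if j < r then j else j+1) (by split_ifs <;> omega)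
      (if i < r then i else i+1) (by split_ifs <;> omega)
    have e1 : insSeq s c r (if i < r then i else i+1) = s i := by
      unfold insSeq
      split_ifs <;> first | rfl | omega | (congr 1; omega)
    have e2 : insSeq s c r (if j < r then j else j+1) = s j := by
      unfold insSeq
      split_ifs <;> first | rfl | omega | (congr 1; omega)
    rwa [e1, e2] at h1

lemma ciN_of_lt {n l i : ℕ} (h : i < n - 1 - l) : ciN n l i = i := if_pos h

lemma tau_ciN_eq_insSeq (m n : ℕ) (h : GG m n) (l : ℕ) (i : ℕ) :
    tauN m n h (ciN n l i) = insSeq (tauN m n h) (tauN m n h (n-1)) (n-1-l) i := by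
  unfold ciN insSeq
  split_ifs <;> rfl

lemma Tp_hu_iff (m n k l a : ℕ) (h : GG m n) (hk : k < n) (hl : l < n) :
    Tp m n k (h * (uElt m n l a)⁻¹) ↔
      ((∀ j, j < n - k → ∀ i, i < j →
          insSeq (tauN m n h) (tauN m n h (n-1)) (n-1-l) i
            < insSeq (tauN m n h) (tauN m n h (n-1)) (n-1-l) j) ∧
       (∀ i, i < n - k → i ≠ n-1-l → nuN m n h (ciN n l i) = 1) ∧
       (n-1-l < n - k → nuN m n h (n-1) = ofAdd ((a : ZMod m)))) := by
  have hn : 1 ≤ n := by omega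
  have hl' : l ≤ n - 1 := by omega
  have hci : ciN n l (n-1-l) = n-1 := by unfold ciN; split_ifs <;> omega
  constructor
  · rintro ⟨h1, h2⟩
    refine ⟨?_, ?_, ?_⟩
    · intro j hj i hij
      have hh := h1 j hj i hij
      rw [tauN_hu m n h l a j hn hl' (by omega), tauN_hu m n h l a i hn hl' (by omega),
        tau_ciN_eq_insSeq, tau_ciN_eq_insSeq] at hh
      exact hh
    · intro i hi hne
      have hh := h2 i hi
      rwa [nuN_hu m n h l a i hn hl' (by omega), if_neg hne, mul_one] at hh
    · intro hr
      have hh := h2 (n-1-l) hr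
      rw [nuN_hu m n h l a (n-1-l) hn hl' (by omega), if_pos rfl, hci] at hh
      exact mul_inv_eq_one.mp hh
  · rintro ⟨h1, h2, h3⟩
    constructor
    · intro j hj i hij
      rw [tauN_hu m n h l a j hn hl' (by omega), tauN_hu m n h l a i hn hl' (by omega),
        tau_ciN_eq_insSeq, tau_ciN_eq_insSeq]
      exact h1 j hj i hij
    · intro i hi
      rw [nuN_hu m n h l a i hn hl' (by omega)]
      by_cases hne : i = n-1-l
      · rw [if_pos hne, hne, hci, h3 (by omega), mul_inv_cancel]
      · rw [if_neg hne, mul_one]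
        exact h2 i hi hne

/-- Case `l < k`: the condition reduces to `Tp k h`, independently of `a`. -/
lemma Tp_hu_iff_B (m n k l a : ℕ) (h : GG m n) (hk : k < n) (hl : l < k) :
    Tp m n k (h * (uElt m n l a)⁻¹) ↔ Tp m n k h := by
  have hr : n - k ≤ n - 1 - l := by omega
  rw [Tp_hu_iff m n k l a h hk (by omega)]
  unfold Tp
  constructor
  · rintro ⟨h1, h2, _⟩
    refine ⟨?_, ?_⟩
    · intro j hj i hij
      have hh := h1 j hj i hij
      rwa [insSeq_lt (by omega), insSeq_lt (by omega)] at hh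
    · intro i hi
      have hh := h2 i hi (by omega)
      rwa [ciN_of_lt (by omega)] at hh
  · rintro ⟨h1, h2⟩
    refine ⟨?_, ?_, fun hcon => absurd hcon (by omega)⟩
    · intro j hj i hij
      rw [insSeq_lt (by omega), insSeq_lt (by omega)]
      exact h1 j hj i hij
    · intro i hi hne
      rw [ciN_of_lt (by omega)]
      exact h2 i hi
/-- Case `k ≤ l < n`. -/
lemma Tp_hu_iff_A (m n k l a : ℕ) (h : GG m n) (hk : k < n) (hkl : k ≤ l) (hl : l < n) :
    Tp m n k (h * (uElt m n l a)⁻¹) ↔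
      ((∀ j, j < n - k → ∀ i, i < j →
          insSeq (tauN m n h) (tauN m n h (n-1)) (n-1-l) i
            < insSeq (tauN m n h) (tauN m n h (n-1)) (n-1-l) j) ∧
       (∀ j, j < n - (k+1) → nuN m n h j = 1) ∧
       nuN m n h (n-1) = ofAdd ((a : ZMod m))) := by
  have hr : n - 1 - l < n - k := by omega
  rw [Tp_hu_iff m n k l a h hk hl]
  constructor
  · rintro ⟨h1, h2, h3⟩
    refine ⟨h1, ?_, h3 hr⟩
    intro j hj
    by_cases hjr : j < n - 1 - l
    · have hh := h2 j (by omega) (by omega)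
      rwa [ciN_of_lt hjr] at hh
    · have hh := h2 (j+1) (by omega) (by omega)
      have : ciN n l (j+1) = j := by unfold ciN; split_ifs <;> omega
      rwa [this] at hh
  · rintro ⟨h1, h2, h3⟩
    refine ⟨h1, ?_, fun _ => h3⟩
    intro i hi hne
    by_cases hir : i < n - 1 - l
    · rw [ciN_of_lt hir]
      exact h2 i (by omega)
    · have : ciN n l i = i - 1 := by unfold ciN; split_ifs <;> omega
      rw [this]
      exact h2 (i-1) (by omega)

lemma ite_mul_ite (P Q : Prop) [Decidable P] [Decidable Q] :
    (if P then (1:ℤ) else 0) * (if Q then 1 else 0) = if P ∧ Q then 1 else 0 := by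
  by_cases hP : P <;> by_cases hQ : Q <;> simp [hP, hQ]

lemma sum_a_eq_one (m n : ℕ) [NeZero m] (h : GG m n) :
    (∑ a ∈ Finset.range m,
        (if nuN m n h (n-1) = ofAdd ((a : ZMod m)) then (1:ℤ) else 0)) = 1 := by
  set z : ZMod m := Multiplicative.toAdd (nuN m n h (n-1)) with hz
  rw [Finset.sum_eq_single_of_mem (ZMod.val z) (Finset.mem_range.mpr (ZMod.val_lt z))]
  · rw [if_pos]
    rw [show ((ZMod.val z : ZMod m)) = z from ZMod.natCast_rightInverse z]
    rw [hz, ofAdd_toAdd]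
  · intro a ha hne
    rw [if_neg]
    intro hcon
    apply hne
    have : z = ((a : ZMod m)) := by rw [hz, hcon, toAdd_ofAdd]
    rw [this, ZMod.val_cast_of_lt (Finset.mem_range.mp ha)]

lemma count_lemma (m n k : ℕ) [NeZero m] (hk : k < n) (h : GG m n) :
    (∑ l ∈ Finset.range n, ∑ a ∈ Finset.range m,
        (if Tp m n k (h * (uElt m n l a)⁻¹) then (1:ℤ) else 0))
      = (if Tp m n (k+1) h then 1 else 0) + (k*m : ℤ) * (if Tp m n k h then 1 else 0) := by
  rw [← Finset.sum_range_add_sum_Ico _ hk.le]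
  have hB : (∑ l ∈ Finset.range k, ∑ a ∈ Finset.range m,
      (if Tp m n k (h * (uElt m n l a)⁻¹) then (1:ℤ) else 0))
      = (k*m : ℤ) * (if Tp m n k h then 1 else 0) := by
    rw [Finset.sum_congr rfl (fun l hl => Finset.sum_congr rfl (fun a _ => by
      rw [if_congr (Tp_hu_iff_B m n k l a h hk
        (Finset.mem_range.mp hl)) rfl rfl]))]
    rw [Finset.sum_const, Finset.sum_const, Finset.card_range, Finset.card_range]
    simp only [nsmul_eq_mul]
    push_cast
    ring
  rw [hB]
  have hA : (∑ l ∈ Finset.Ico k n, ∑ a ∈ Finset.range m,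
      (if Tp m n k (h * (uElt m n l a)⁻¹) then (1:ℤ) else 0))
      = (if Tp m n (k+1) h then 1 else 0) := by
    have hinner : ∀ l ∈ Finset.Ico k n, (∑ a ∈ Finset.range m,
        (if Tp m n k (h * (uElt m n l a)⁻¹) then (1:ℤ) else 0))
        = (if ((∀ j, j < n - k → ∀ i, i < j →
            insSeq (tauN m n h) (tauN m n h (n-1)) (n-1-l) i
              < insSeq (tauN m n h) (tauN m n h (n-1)) (n-1-l) j)
          ∧ (∀ j, j < n - (k+1) → nuN m n h j = 1)) then (1:ℤ) else 0) := by
      intro l hl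
      rw [Finset.mem_Ico] at hl
      rw [Finset.sum_congr rfl (fun a _ => by
        rw [if_congr (Tp_hu_iff_A m n k l a h hk hl.1 hl.2) rfl rfl,
          if_congr (and_assoc.symm : _ ↔ (_ ∧ _) ∧ _) rfl rfl,
          ← ite_mul_ite])]
      rw [← Finset.mul_sum, sum_a_eq_one m n h, mul_one]
    rw [Finset.sum_congr rfl hinner]
    rw [Finset.sum_congr rfl (fun l _ => (ite_mul_ite _ _).symm)]
    rw [← Finset.sum_mul]
    have hre : (∑ l ∈ Finset.Ico k n, (if (∀ j, j < n - k → ∀ i, i < j →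
        insSeq (tauN m n h) (tauN m n h (n-1)) (n-1-l) i
          < insSeq (tauN m n h) (tauN m n h (n-1)) (n-1-l) j) then (1:ℤ) else 0))
        = (∑ r ∈ Finset.range (n-k), (if (∀ j, j < n - k → ∀ i, i < j →
        insSeq (tauN m n h) (tauN m n h (n-1)) r i
          < insSeq (tauN m n h) (tauN m n h (n-1)) r j) then (1:ℤ) else 0)) := by
      apply Finset.sum_nbij' (fun l => n-1-l) (fun r => n-1-r)
      · intro l hl
        rw [Finset.mem_Ico] at hl
        rw [Finset.mem_range]
        omega
      · intro r hr
        rw [Finset.mem_range] at hr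
        rw [Finset.mem_Ico]
        omega
      · intro l hl
        rw [Finset.mem_Ico] at hl
        omega
      · intro r hr
        rw [Finset.mem_range] at hr
        omega
      · intro l _
        rfl
    rw [hre]
    rw [ins_count (n-k) (by omega) (tauN m n h) (tauN m n h (n-1)) ?hc]
    case hc =>
      intro j hj
      unfold tauN
      rw [dif_pos (by omega : j < n), dif_pos (by omega : n-1 < n)]
      intro hcon
      have : (⟨j, by omega⟩ : Fin n) = ⟨n-1, by omega⟩ :=
        h.right.injective (Fin.ext (by exact_mod_cast hcon))
      rw [Fin.ext_iff] at this
      simp only [] at this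
      omega
    rw [ite_mul_ite]
    apply if_congr _ rfl rfl
    unfold Tp
    rw [Nat.sub_sub]
  rw [hA]
  ring

/-- The partial shuffle set `T_k`. -/
noncomputable def Tset (m n : ℕ) [NeZero m] (k : ℕ) : Finset (GG m n) :=
  Finset.univ.filter (fun g => Tp m n k g)

lemma Tp_zero_iff (m n : ℕ) (g : GG m n) : Tp m n 0 g ↔ g = 1 := by
  constructor
  · rintro ⟨h1, h2⟩
    have hmono : StrictMono g.right := by
      intro i j hij
      have hh := h1 (j : ℕ) (by omega) (i : ℕ) hij
      unfold tauN at hh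
      rw [dif_pos i.isLt, dif_pos j.isLt] at hh
      rw [show ((⟨(i:ℕ), i.isLt⟩ : Fin n)) = i from Fin.ext rfl,
        show ((⟨(j:ℕ), j.isLt⟩ : Fin n)) = j from Fin.ext rfl] at hh
      exact hh
    have hright : g.right = 1 := by
      haveI : WellFoundedLT (Fin n) := Finite.to_wellFoundedLT
      have hfun : ⇑g.right = ⇑(1 : Equiv.Perm (Fin n)) := by
        apply (hmono.range_inj strictMono_id).1
        rw [Set.range_id]
        exact g.right.surjective.range_eq
      ext x
      rw [hfun]
    have hleft : g.left = 1 := by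
      funext x
      obtain ⟨i, hi⟩ := g.right.surjective x
      have hh := h2 (i : ℕ) (by omega)
      unfold nuN at hh
      rw [dif_pos i.isLt] at hh
      rw [show ((⟨(i:ℕ), i.isLt⟩ : Fin n)) = i from Fin.ext rfl] at hh
      rw [← hi]
      exact hh
    exact SemidirectProduct.ext hleft hright
  · rintro rfl
    constructor
    · intro j hj i hij
      unfold tauN
      rw [dif_pos (by omega : i < n), dif_pos (by omega : j < n)]
      simpa using hij
    · intro i hi
      unfold nuN
      rw [dif_pos (by omega : i < n)]
      rfl

lemma Tset_zero (m n : ℕ) [NeZero m] : Tset m n 0 = {1} := by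
  ext g
  simp [Tset, Tp_zero_iff]

lemma Tset_top (m n : ℕ) [NeZero m] : Tset m n n = Finset.univ := by
  ext g
  simp only [Tset, Finset.mem_filter, Finset.mem_univ, true_and, iff_true]
  exact ⟨fun j hj => by omega, fun i hi => by omega⟩

lemma msha_eq (m n : ℕ) : msha m n n
    = ∑ l ∈ Finset.range n, ∑ a ∈ Finset.range m,
        MonoidAlgebra.of ℤ (GG m n) (uElt m n l a) := by
  unfold msha uElt
  rw [Finset.sum_mul_sum]
  exact Finset.sum_congr rfl (fun l _ => Finset.sum_congr rfl (fun a _ => (map_mul _ _ _).symm))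

lemma step_lemma (m n k : ℕ) [NeZero m] (hk : k < n) :
    (∑ g ∈ Tset m n k, MonoidAlgebra.of ℤ (GG m n) g) * msha m n n
      = (∑ g ∈ Tset m n (k+1), MonoidAlgebra.of ℤ (GG m n) g)
        + ((k*m : ℕ) : MonoidAlgebra ℤ (GG m n))
            * (∑ g ∈ Tset m n k, MonoidAlgebra.of ℤ (GG m n) g) := by
  have lhs_eq : (∑ g ∈ Tset m n k, MonoidAlgebra.of ℤ (GG m n) g) * msha m n n
      = ∑ g ∈ Tset m n k, ∑ l ∈ Finset.range n, ∑ a ∈ Finset.range m,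
          MonoidAlgebra.single (g * uElt m n l a) (1:ℤ) := by
    rw [msha_eq, Finset.sum_mul_sum]
    apply Finset.sum_congr rfl
    intro g _
    apply Finset.sum_congr rfl
    intro l _
    rw [Finset.mul_sum]
    apply Finset.sum_congr rfl
    intro a _
    rw [← map_mul, MonoidAlgebra.of_apply]
  have rhs1 : (∑ g ∈ Tset m n (k+1), MonoidAlgebra.of ℤ (GG m n) g)
      = ∑ g ∈ Tset m n (k+1), MonoidAlgebra.single g (1:ℤ) :=
    Finset.sum_congr rfl (fun g _ => by rw [MonoidAlgebra.of_apply])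
  have rhs2 : ((k*m : ℕ) : MonoidAlgebra ℤ (GG m n))
        * (∑ g ∈ Tset m n k, MonoidAlgebra.of ℤ (GG m n) g)
      = ∑ g ∈ Tset m n k, MonoidAlgebra.single g (((k*m : ℕ) : ℤ)) := by
    rw [MonoidAlgebra.natCast_def, Finset.mul_sum]
    apply Finset.sum_congr rfl
    intro g _
    rw [MonoidAlgebra.of_apply, MonoidAlgebra.single_mul_single, one_mul, mul_one]
  rw [lhs_eq, rhs1, rhs2]
  apply MonoidAlgebra.ext
  apply Finsupp.ext
  intro x
  simp only [MonoidAlgebra.coeff_add, MonoidAlgebra.coeff_sum, MonoidAlgebra.coeff_single]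
  rw [Finsupp.add_apply, Finsupp.finset_sum_apply, Finsupp.finset_sum_apply,
    Finsupp.finset_sum_apply]
  have hLHS : (∑ g ∈ Tset m n k, ((∑ l ∈ Finset.range n, ∑ a ∈ Finset.range m,
      Finsupp.single (g * uElt m n l a) (1:ℤ)) : GG m n →₀ ℤ) x)
      = ∑ g ∈ Tset m n k, ∑ l ∈ Finset.range n, ∑ a ∈ Finset.range m,
          (if g = x * (uElt m n l a)⁻¹ then (1:ℤ) else 0) := by
    apply Finset.sum_congr rfl
    intro g _
    rw [Finsupp.finset_sum_apply]
    apply Finset.sum_congr rfl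
    intro l _
    rw [Finsupp.finset_sum_apply]
    apply Finset.sum_congr rfl
    intro a _
    rw [Finsupp.single_apply]
    apply if_congr _ rfl rfl
    exact (eq_mul_inv_iff_mul_eq).symm
  rw [hLHS, Finset.sum_comm]
  rw [Finset.sum_congr rfl (fun l _ => Finset.sum_comm)]
  have hswap : ∀ l ∈ Finset.range n, ∀ a ∈ Finset.range m,
      (∑ g ∈ Tset m n k, (if g = x * (uElt m n l a)⁻¹ then (1:ℤ) else 0))
        = (if Tp m n k (x * (uElt m n l a)⁻¹) then (1:ℤ) else 0) := by
    intro l _ a _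
    rw [Finset.sum_ite_eq' (Tset m n k) (x * (uElt m n l a)⁻¹) (fun _ => (1:ℤ))]
    apply if_congr _ rfl rfl
    simp [Tset]
  rw [Finset.sum_congr rfl (fun l hl => Finset.sum_congr rfl (fun a ha => hswap l hl a ha))]
  rw [count_lemma m n k hk x]
  congr 1
  · rw [Finset.sum_congr rfl (fun g _ => Finsupp.single_apply)]
    rw [Finset.sum_ite_eq' (Tset m n (k+1)) x (fun _ => (1:ℤ))]
    apply if_congr _ rfl rfl
    simp [Tset]
  · rw [Finset.sum_congr rfl (fun g _ => Finsupp.single_apply)]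
    rw [Finset.sum_ite_eq' (Tset m n k) x (fun _ => ((k*m : ℕ) : ℤ))]
    by_cases hx : Tp m n k x <;> simp [Tset, hx, Nat.cast_mul]

end MshaProof

/-- In `ℤ G(m,1,n)`, the product `∏_{i=0}^{n-1} (⁽ᵐ⁾Ш_{1,n-1} − i·m)`
equals the sum of all elements of the group `G(m,1,n)`. -/
theorem prod_msha_sub_eq_sum (m n : ℕ) [NeZero m] :
    (((List.range n).map (fun i => msha m n n - ((i * m : ℕ) : MonoidAlgebra ℤ (GG m n)))).prod) =
      ∑ g : GG m n, MonoidAlgebra.of ℤ (GG m n) g := by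
  have key : ∀ k, k ≤ n →
      (((List.range k).map
          (fun i => msha m n n - ((i * m : ℕ) : MonoidAlgebra ℤ (GG m n)))).prod)
        = ∑ g ∈ MshaProof.Tset m n k, MonoidAlgebra.of ℤ (GG m n) g := by
    intro k
    induction k with
    | zero =>
      intro _
      rw [MshaProof.Tset_zero]
      simp only [List.range_zero, List.map_nil, List.prod_nil, Finset.sum_singleton]
      rw [MonoidAlgebra.of_apply, MonoidAlgebra.one_def]
    | succ k ih =>
      intro hk1
      rw [List.range_succ, List.map_append, List.prod_append, ih (by omega)]
      simp only [List.map_cons, List.map_nil, List.prod_cons, List.prod_nil, mul_one]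
      rw [mul_sub, MshaProof.step_lemma m n k (by omega)]
      rw [← (Nat.cast_commute (k*m)
        (∑ g ∈ MshaProof.Tset m n k, MonoidAlgebra.of ℤ (GG m n) g)).eq]
      rw [add_sub_cancel_right]
  rw [key n (le_refl n), MshaProof.Tset_top]
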